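/- Let P be a monic complex polynomial of degree n ≥ 1, let R > 0, and let Ψ : ℂ → ℂ be holomorphic on {z ∈ ℂ : |z| > R} with P(Ψ(z)) = z^n for all |z| > R. Let k ≥ 1 be an integer, F a complex polynomial, and (c_l)_{l≥1} complex numbers such that for every z with |z| > R the series Σ_{l≥1} c_l z^{−l} converges unconditionally (HasSum) with sum F(Ψ(z)) − z^{nk}. Then F = P^k and c_l = 0 for every l ≥ 1. -/

import Mathlib

open Filter

/-- If `s z` is the sum of a series `∑ a (l+1) / z^(l+1)` for all `|z| > R`, then
`s t → 0` as the real parameter `t → ∞`. -/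
private lemma sum_tendsto_zero {R : ℝ} (hR : 0 < R) (a : ℕ → ℂ) (s : ℂ → ℂ)
    (h : ∀ z : ℂ, R < ‖z‖ → HasSum (fun l : ℕ => a (l + 1) / z ^ (l + 1)) (s z)) :
    Tendsto (fun t : ℝ => s (t : ℂ)) atTop (nhds 0) := by
  set z0 : ℂ := ((2 * R : ℝ) : ℂ) with hz0def
  have hz0 : R < ‖z0‖ := by
    rw [hz0def, Complex.norm_real, Real.norm_eq_abs, abs_of_pos (by linarith)]
    linarith
  have hz0norm : ‖z0‖ = 2 * R := by
    rw [hz0def, Complex.norm_real, Real.norm_eq_abs, abs_of_pos (by linarith)]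
  have hsum0 := (h z0 hz0).summable
  have hterm : Tendsto (fun l : ℕ => ‖a (l + 1) / z0 ^ (l + 1)‖) atTop (nhds 0) := by
    simpa using (hsum0.tendsto_atTop_zero).norm
  obtain ⟨M, hM⟩ := hterm.bddAbove_range
  have hMnonneg : 0 ≤ M := le_trans (norm_nonneg _) (hM ⟨0, rfl⟩)
  have hMb : ∀ l : ℕ, ‖a (l + 1)‖ ≤ M * (2 * R) ^ (l + 1) := by
    intro l
    have h1 : ‖a (l + 1) / z0 ^ (l + 1)‖ ≤ M := hM ⟨l, rfl⟩
    rw [norm_div, norm_pow, hz0norm] at h1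
    have hpow : (0 : ℝ) < (2 * R) ^ (l + 1) := pow_pos (by linarith) _
    rwa [div_le_iff₀ hpow] at h1
  -- the squeezing function
  have hu : Tendsto (fun t : ℝ => 2 * R / t) atTop (nhds 0) :=
    Tendsto.div_atTop tendsto_const_nhds tendsto_id
  have hg : Tendsto (fun t : ℝ => M * (2 * R / t) * (1 - 2 * R / t)⁻¹) atTop (nhds 0) := by
    have : Tendsto (fun t : ℝ => M * (2 * R / t) * (1 - 2 * R / t)⁻¹) atTop
        (nhds ((M * 0) * (1 - 0)⁻¹)) :=
      ((tendsto_const_nhds.mul hu)).mul ((tendsto_const_nhds.sub hu).inv₀ (by norm_num))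
    simpa using this
  refine squeeze_zero_norm' ?_ hg
  filter_upwards [eventually_ge_atTop (4 * R)] with t ht
  have htpos : (0 : ℝ) < t := by linarith
  have htR : R < ‖(t : ℂ)‖ := by
    rw [Complex.norm_real, Real.norm_eq_abs, abs_of_pos htpos]; linarith
  set r : ℝ := 2 * R / t with hrdef
  have hr0 : 0 ≤ r := div_nonneg (by linarith) htpos.le
  have hr1 : r < 1 := by
    rw [hrdef, div_lt_one htpos]; linarith
  have hgeo : HasSum (fun l : ℕ => (M * r) * r ^ l) ((M * r) * (1 - r)⁻¹) :=
    (hasSum_geometric_of_lt_one hr0 hr1).mul_left _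
  have hbound : ∀ l : ℕ, ‖a (l + 1) / (t : ℂ) ^ (l + 1)‖ ≤ (M * r) * r ^ l := by
    intro l
    rw [norm_div, norm_pow, Complex.norm_real, Real.norm_eq_abs, abs_of_pos htpos]
    calc ‖a (l + 1)‖ / t ^ (l + 1) ≤ M * (2 * R) ^ (l + 1) / t ^ (l + 1) := by
          gcongr
          exact hMb l
      _ = (M * r) * r ^ l := by
          rw [hrdef]
          rw [mul_assoc, ← pow_succ', div_pow, mul_div_assoc]
  have hst : s (t : ℂ) = ∑' l : ℕ, a (l + 1) / (t : ℂ) ^ (l + 1) :=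
    (h _ htR).tsum_eq.symm
  rw [hst]
  exact tsum_of_norm_bounded hgeo hbound

/-- If `∑ a (l+1)/z^(l+1) = 0` for all `|z| > R`, then all coefficients vanish. -/
private lemma coeffs_eq_zero {R : ℝ} (hR : 0 < R) (a : ℕ → ℂ)
    (h : ∀ z : ℂ, R < ‖z‖ → HasSum (fun l : ℕ => a (l + 1) / z ^ (l + 1)) 0) :
    ∀ m : ℕ, a (m + 1) = 0 := by
  intro m
  induction m using Nat.strong_induction_on with
  | _ m IH =>
  set b : ℕ → ℂ := fun j => a (j + m + 1) with hbdef
  have key : ∀ z : ℂ, R < ‖z‖ → HasSum (fun l : ℕ => b (l + 1) / z ^ (l + 1)) (-(b 0)) := by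
    intro z hz
    have hzne : z ≠ 0 := by
      intro h0
      rw [h0, norm_zero] at hz; linarith
    have h1 := h z hz
    -- shift by m, previous coefficients vanish
    have h2 : HasSum (fun l : ℕ => a (l + m + 1) / z ^ (l + m + 1)) 0 := by
      refine (hasSum_nat_add_iff (f := fun n => a (n + 1) / z ^ (n + 1)) m).mpr ?_
      have hs : (∑ i ∈ Finset.range m, a (i + 1) / z ^ (i + 1)) = 0 :=
        Finset.sum_eq_zero fun i hi => by rw [IH i (Finset.mem_range.mp hi), zero_div]
      rw [hs, add_zero]
      exact h1
    -- multiply by z^(m+1)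
    have h3 : HasSum (fun l : ℕ => z ^ (m + 1) * (a (l + m + 1) / z ^ (l + m + 1))) 0 := by
      simpa using h2.mul_left (z ^ (m + 1))
    have hfun : (fun l : ℕ => z ^ (m + 1) * (a (l + m + 1) / z ^ (l + m + 1)))
        = fun l : ℕ => b l / z ^ l := by
      funext l
      show z ^ (m + 1) * (a (l + m + 1) / z ^ (l + m + 1)) = a (l + m + 1) / z ^ l
      have hzl : z ^ (l + m + 1) = z ^ l * z ^ (m + 1) := by ring
      rw [hzl]
      field_simp
    rw [hfun] at h3
    -- peel off the first term
    refine (hasSum_nat_add_iff (f := fun l => b l / z ^ l) 1).mpr ?_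
    have hs1 : (∑ i ∈ Finset.range 1, b i / z ^ i) = b 0 := by simp
    rw [hs1]
    simpa using h3
  have htd := sum_tendsto_zero hR b (fun _ => -(b 0)) key
  have hb0 : -(b 0) = 0 := tendsto_nhds_unique tendsto_const_nhds htd
  have : b 0 = 0 := neg_eq_zero.mp hb0
  simpa [hbdef] using this

/-- For a lemniscate with exterior map `Ψ` satisfying `P(Ψ(z)) = z^n` for a monic
polynomial `P` of degree `n`, the Faber polynomial of degree `nk` is `P^k` and all
Grunsky coefficients `c_{nk, l}` vanish. -/
theorem lemniscate_faber_and_grunsky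
    (P : Polynomial ℂ) (n : ℕ) (hn : 1 ≤ n) (hmonic : P.Monic)
    (hdeg : P.natDegree = n)
    (R : ℝ) (hR : 0 < R) (Ψ : ℂ → ℂ)
    (hΨ : DifferentiableOn ℂ Ψ {z : ℂ | R < ‖z‖})
    (hP : ∀ z : ℂ, R < ‖z‖ → P.eval (Ψ z) = z ^ n)
    (k : ℕ) (hk : 1 ≤ k) (F : Polynomial ℂ) (c : ℕ → ℂ)
    (hser : ∀ z : ℂ, R < ‖z‖ →
      HasSum (fun l : ℕ => c (l + 1) / z ^ (l + 1)) (F.eval (Ψ z) - z ^ (n * k))) :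
    F = P ^ k ∧ ∀ l : ℕ, 1 ≤ l → c l = 0 := by
  set Q : Polynomial ℂ := F - P ^ k with hQdef
  have hQeval : ∀ z : ℂ, R < ‖z‖ → Q.eval (Ψ z) = F.eval (Ψ z) - z ^ (n * k) := by
    intro z hz
    rw [hQdef, Polynomial.eval_sub, Polynomial.eval_pow, hP z hz, ← pow_mul]
  have hser' : ∀ z : ℂ, R < ‖z‖ →
      HasSum (fun l : ℕ => c (l + 1) / z ^ (l + 1)) (Q.eval (Ψ z)) := by
    intro z hz
    rw [hQeval z hz]
    exact hser z hz
  have htend : Tendsto (fun t : ℝ => Q.eval (Ψ (t : ℂ))) atTop (nhds 0) :=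
    sum_tendsto_zero hR c _ hser'
  -- Ψ escapes to infinity
  have hΨtend : Tendsto (fun t : ℝ => ‖Ψ ((t : ℂ))‖) atTop atTop := by
    rw [tendsto_atTop]
    intro B
    obtain ⟨M, hM⟩ := (isCompact_closedBall (0 : ℂ) B).exists_bound_of_continuousOn
      P.continuous.continuousOn
    have hpow : Tendsto (fun t : ℝ => t ^ n) atTop atTop :=
      tendsto_pow_atTop (by omega)
    filter_upwards [hpow.eventually_gt_atTop M, eventually_gt_atTop R,
      eventually_gt_atTop (0 : ℝ)] with t h1 h2 h3
    by_contra hB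
    push_neg at hB
    have hmem : Ψ (t : ℂ) ∈ Metric.closedBall (0 : ℂ) B := by
      rw [Metric.mem_closedBall, dist_zero_right]
      exact hB.le
    have hle : ‖Polynomial.eval (Ψ (t : ℂ)) P‖ ≤ M := hM _ hmem
    have htR : R < ‖(t : ℂ)‖ := by
      rw [Complex.norm_real, Real.norm_eq_abs, abs_of_pos h3]; exact h2
    rw [hP t htR, norm_pow, Complex.norm_real, Real.norm_eq_abs, abs_of_pos h3] at hle
    linarith
  have hQ0 : Q = 0 := by
    by_contra hQ
    by_cases hdQ : 0 < Q.degree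
    · have hinf : Tendsto (fun t : ℝ => ‖Q.eval (Ψ (t : ℂ))‖) atTop atTop :=
        Q.tendsto_norm_atTop hdQ hΨtend
      have h0 : Tendsto (fun t : ℝ => ‖Q.eval (Ψ (t : ℂ))‖) atTop (nhds 0) := by
        simpa using htend.norm
      exact not_tendsto_atTop_of_tendsto_nhds h0 hinf
    · have hC : Q = Polynomial.C (Q.coeff 0) :=
        Polynomial.eq_C_of_degree_le_zero (not_lt.mp hdQ)
      have hconst : Tendsto (fun _ : ℝ => Q.coeff 0) atTop (nhds 0) := by
        have heq : (fun t : ℝ => Q.eval (Ψ (t : ℂ))) = fun _ : ℝ => Q.coeff 0 := by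
          funext t
          conv_lhs => rw [hC]
          rw [Polynomial.eval_C]
        rwa [heq] at htend
      have : Q.coeff 0 = 0 := tendsto_nhds_unique tendsto_const_nhds hconst
      rw [this, map_zero] at hC
      exact hQ hC
  have hF : F = P ^ k := by
    have := hQ0
    rw [hQdef, sub_eq_zero] at this
    exact this
  refine ⟨hF, ?_⟩
  have hzero : ∀ z : ℂ, R < ‖z‖ →
      HasSum (fun l : ℕ => c (l + 1) / z ^ (l + 1)) 0 := by
    intro z hz
    have := hser' z hz
    rwa [hQ0, Polynomial.eval_zero] at this
  intro l hl
  obtain ⟨m, rfl⟩ := Nat.exists_eq_add_of_le hl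
  simpa [add_comm] using coeffs_eq_zero hR c hzero m
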